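/- Let α_1, α_2 ∈ (0,1) with α_1 ≠ α_2 and c_1, c_2, c_3, c_4 ≥ 0. Let (γ_1,γ_2) be the maximizer of E over Ω(c_1,c_2,c_3,c_4), let 0 ≤ r < γ_1, and let (γ̂_1,γ̂_2) be the maximizer of E over Ω(r,c_2,c_3,c_4). Then: γ̂_1 = r; γ̂_2 ≥ γ_2; α_1 γ̂_1 + α_2 γ̂_2 ≤ α_1 γ_1 + α_2 γ_2; (1−α_1) γ̂_1 + (1−α_2) γ̂_2 ≤ (1−α_1) γ_1 + (1−α_2) γ_2; and |γ̂_1 − r| + |γ̂_2 − γ_2| + |(α_1γ̂_1 + α_2γ̂_2) − (α_1γ_1 + α_2γ_2)| + |((1−α_1)γ̂_1 + (1−α_2)γ̂_2) − ((1−α_1)γ_1 + (1−α_2)γ_2)| = γ_1 − r. -/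

import Mathlib

open Set

set_option maxHeartbeats 4000000

/-- Membership in the feasible set `Ω(c₁,c₂,c₃,c₄)` of incoming fluxes at a
junction with two incoming and two outgoing roads. -/
def memOmega (α₁ α₂ c₁ c₂ c₃ c₄ γ₁ γ₂ : ℝ) : Prop :=
  0 ≤ γ₁ ∧ γ₁ ≤ c₁ ∧ 0 ≤ γ₂ ∧ γ₂ ≤ c₂ ∧
    α₁ * γ₁ + α₂ * γ₂ ≤ c₃ ∧ (1 - α₁) * γ₁ + (1 - α₂) * γ₂ ≤ c₄

/-- Key estimate in Lemma 6.1 (first case): when a wave lowers the maximal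
incoming flux of the first road from `γ₁` to `r`, the total variation of the
fluxes is conserved across the interaction. -/
theorem stmt10 (α₁ α₂ : ℝ) (hα₁ : α₁ ∈ Ioo (0 : ℝ) 1) (hα₂ : α₂ ∈ Ioo (0 : ℝ) 1)
    (hne : α₁ ≠ α₂) (c₁ c₂ c₃ c₄ : ℝ)
    (hc₁ : 0 ≤ c₁) (hc₂ : 0 ≤ c₂) (hc₃ : 0 ≤ c₃) (hc₄ : 0 ≤ c₄)
    (γ₁ γ₂ : ℝ)
    (hmem : memOmega α₁ α₂ c₁ c₂ c₃ c₄ γ₁ γ₂)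
    (hmax : ∀ δ₁ δ₂, memOmega α₁ α₂ c₁ c₂ c₃ c₄ δ₁ δ₂ → δ₁ + δ₂ ≤ γ₁ + γ₂)
    (r : ℝ) (hr0 : 0 ≤ r) (hr : r < γ₁)
    (γh₁ γh₂ : ℝ)
    (hmem' : memOmega α₁ α₂ r c₂ c₃ c₄ γh₁ γh₂)
    (hmax' : ∀ δ₁ δ₂, memOmega α₁ α₂ r c₂ c₃ c₄ δ₁ δ₂ → δ₁ + δ₂ ≤ γh₁ + γh₂) :
    γh₁ = r ∧ γ₂ ≤ γh₂ ∧
    α₁ * γh₁ + α₂ * γh₂ ≤ α₁ * γ₁ + α₂ * γ₂ ∧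
    (1 - α₁) * γh₁ + (1 - α₂) * γh₂ ≤ (1 - α₁) * γ₁ + (1 - α₂) * γ₂ ∧
    |γh₁ - r| + |γh₂ - γ₂| +
      |(α₁ * γh₁ + α₂ * γh₂) - (α₁ * γ₁ + α₂ * γ₂)| +
      |((1 - α₁) * γh₁ + (1 - α₂) * γh₂) - ((1 - α₁) * γ₁ + (1 - α₂) * γ₂)| =
      γ₁ - r := by
  obtain ⟨hα₁0, hα₁1⟩ := hα₁
  obtain ⟨hα₂0, hα₂1⟩ := hα₂
  obtain ⟨h10, h11, h20, h21, h3, h4⟩ := hmem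
  obtain ⟨g10, g11, g20, g21, g3, g4⟩ := hmem'
  -- (r, γ₂) is feasible for the restricted problem
  have hrmem : memOmega α₁ α₂ r c₂ c₃ c₄ r γ₂ := by
    refine ⟨hr0, le_refl r, h20, h21, by nlinarith, by nlinarith⟩
  have hA : r + γ₂ ≤ γh₁ + γh₂ := hmax' _ _ hrmem
  -- (γh₁, γh₂) is feasible for the original problem
  have hB : γh₁ + γh₂ ≤ γ₁ + γ₂ :=
    hmax _ _ ⟨g10, g11.trans (hr.le.trans h11), g20, g21, g3, g4⟩
  -- Step 1 : γh₁ = r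
  have hgh1 : γh₁ = r := by
    by_contra hne1
    have hlt : γh₁ < r := lt_of_le_of_ne g11 hne1
    rcases lt_or_eq_of_le hB with hSlt | hSeq
    · -- strict : slide toward (γ₁,γ₂) until the first coordinate hits r
      have hd : 0 < γ₁ - γh₁ := by linarith
      set t : ℝ := (r - γh₁) / (γ₁ - γh₁) with ht
      have ht0 : 0 < t := div_pos (by linarith) hd
      have ht1 : t < 1 := (div_lt_one hd).mpr (by linarith)
      have h1eq : γh₁ + t * (γ₁ - γh₁) = r := by
        rw [ht, div_mul_cancel₀ _ hd.ne']; ring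
      have ht0' : (0:ℝ) ≤ t := ht0.le
      have ht1' : (0:ℝ) ≤ 1 - t := by linarith
      have hm : memOmega α₁ α₂ r c₂ c₃ c₄ (γh₁ + t * (γ₁ - γh₁))
          (γh₂ + t * (γ₂ - γh₂)) := by
        refine ⟨?_, le_of_eq h1eq, ?_, ?_, ?_, ?_⟩
        · have h1 : 0 ≤ (1 - t) * γh₁ := mul_nonneg ht1' g10
          have h2 : 0 ≤ t * γ₁ := mul_nonneg ht0' h10
          nlinarith [h1, h2]
        · have h1 : 0 ≤ (1 - t) * γh₂ := mul_nonneg ht1' g20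
          have h2 : 0 ≤ t * γ₂ := mul_nonneg ht0' h20
          nlinarith [h1, h2]
        · calc γh₂ + t * (γ₂ - γh₂) = (1 - t) * γh₂ + t * γ₂ := by ring
            _ ≤ (1 - t) * c₂ + t * c₂ :=
              add_le_add (mul_le_mul_of_nonneg_left g21 ht1')
                (mul_le_mul_of_nonneg_left h21 ht0')
            _ = c₂ := by ring
        · calc α₁ * (γh₁ + t * (γ₁ - γh₁)) + α₂ * (γh₂ + t * (γ₂ - γh₂))
              = (1 - t) * (α₁ * γh₁ + α₂ * γh₂) + t * (α₁ * γ₁ + α₂ * γ₂) := by ring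
            _ ≤ (1 - t) * c₃ + t * c₃ :=
              add_le_add (mul_le_mul_of_nonneg_left g3 ht1')
                (mul_le_mul_of_nonneg_left h3 ht0')
            _ = c₃ := by ring
        · calc (1 - α₁) * (γh₁ + t * (γ₁ - γh₁)) + (1 - α₂) * (γh₂ + t * (γ₂ - γh₂))
              = (1 - t) * ((1 - α₁) * γh₁ + (1 - α₂) * γh₂)
                + t * ((1 - α₁) * γ₁ + (1 - α₂) * γ₂) := by ring
            _ ≤ (1 - t) * c₄ + t * c₄ :=
              add_le_add (mul_le_mul_of_nonneg_left g4 ht1')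
                (mul_le_mul_of_nonneg_left h4 ht0')
            _ = c₄ := by ring
      have hsum := hmax' _ _ hm
      nlinarith [mul_pos ht0 (show (0:ℝ) < γ₁ + γ₂ - (γh₁ + γh₂) by linarith)]
    · -- equal sums : uniqueness of the maximizer gives a contradiction
      have hd : γ₁ - γh₁ ≠ 0 := by intro h; exact hne1 (by linarith [hlt, hr])
      have hd' : 0 < γ₁ - γh₁ := by linarith
      have hu3 : α₁ * γ₁ + α₂ * γ₂ ≠ α₁ * γh₁ + α₂ * γh₂ := by
        intro h
        exact hne (mul_right_cancel₀ hd (by nlinarith))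
      have hu4 : (1 - α₁) * γ₁ + (1 - α₂) * γ₂ ≠ (1 - α₁) * γh₁ + (1 - α₂) * γh₂ := by
        intro h
        have : (1 - α₁) = (1 - α₂) := mul_right_cancel₀ hd (by nlinarith)
        exact hne (by linarith)
      set m₁ : ℝ := (γ₁ + γh₁) / 2 with hm₁
      set m₂ : ℝ := (γ₂ + γh₂) / 2 with hm₂
      have hs3 : α₁ * m₁ + α₂ * m₂ < c₃ := by
        rcases hu3.lt_or_gt with h | h
        · simp only [hm₁, hm₂]; nlinarith
        · simp only [hm₁, hm₂]; nlinarith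
      have hs4 : (1 - α₁) * m₁ + (1 - α₂) * m₂ < c₄ := by
        rcases hu4.lt_or_gt with h | h
        · simp only [hm₁, hm₂]; nlinarith
        · simp only [hm₁, hm₂]; nlinarith
      have hm1c : m₁ < c₁ := by simp only [hm₁]; linarith
      set e : ℝ := min (c₁ - m₁) (min ((c₃ - (α₁ * m₁ + α₂ * m₂)) / α₁)
        ((c₄ - ((1 - α₁) * m₁ + (1 - α₂) * m₂)) / (1 - α₁))) with he
      have he0 : 0 < e := by
        refine lt_min (by linarith) (lt_min ?_ ?_)
        · exact div_pos (by linarith) hα₁0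
        · exact div_pos (by linarith) (by linarith)
      have he1 : e ≤ c₁ - m₁ := min_le_left _ _
      have he2 : α₁ * e ≤ c₃ - (α₁ * m₁ + α₂ * m₂) := by
        have := (he ▸ (min_le_of_right_le (min_le_left _ _)) :
          e ≤ (c₃ - (α₁ * m₁ + α₂ * m₂)) / α₁)
        calc α₁ * e ≤ α₁ * ((c₃ - (α₁ * m₁ + α₂ * m₂)) / α₁) := by
              exact mul_le_mul_of_nonneg_left this hα₁0.le
          _ = c₃ - (α₁ * m₁ + α₂ * m₂) := by field_simp
      have he3 : (1 - α₁) * e ≤ c₄ - ((1 - α₁) * m₁ + (1 - α₂) * m₂) := by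
        have h1α : (0:ℝ) < 1 - α₁ := by linarith
        have := (he ▸ (min_le_of_right_le (min_le_right _ _)) :
          e ≤ (c₄ - ((1 - α₁) * m₁ + (1 - α₂) * m₂)) / (1 - α₁))
        calc (1 - α₁) * e ≤ (1 - α₁) * ((c₄ - ((1 - α₁) * m₁ + (1 - α₂) * m₂)) / (1 - α₁)) :=
              mul_le_mul_of_nonneg_left this h1α.le
          _ = c₄ - ((1 - α₁) * m₁ + (1 - α₂) * m₂) := by field_simp
      have hmem2 : memOmega α₁ α₂ c₁ c₂ c₃ c₄ (m₁ + e) m₂ := by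
        refine ⟨by simp only [hm₁]; linarith, by linarith, by simp only [hm₂]; linarith,
          by simp only [hm₂]; linarith, by nlinarith, by nlinarith⟩
      have := hmax _ _ hmem2
      have hms : m₁ + m₂ = γ₁ + γ₂ := by simp only [hm₁, hm₂]; linarith
      linarith
  -- Step 2 : γ₂ ≤ γh₂
  have hD : γ₂ ≤ γh₂ := by linarith [hA, hgh1.symm.le, hgh1.le]
  -- Step 3 : which constraint binds at (γ₁, γ₂)?
  have hbind : γ₂ = c₂ ∨ α₁ * γ₁ + α₂ * γ₂ = c₃ ∨
      (1 - α₁) * γ₁ + (1 - α₂) * γ₂ = c₄ := by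
    by_contra h
    push_neg at h
    obtain ⟨hb2, hb3, hb4⟩ := h
    have hb2' : γ₂ < c₂ := lt_of_le_of_ne h21 hb2
    have hb3' : α₁ * γ₁ + α₂ * γ₂ < c₃ := lt_of_le_of_ne h3 hb3
    have hb4' : (1 - α₁) * γ₁ + (1 - α₂) * γ₂ < c₄ := lt_of_le_of_ne h4 hb4
    have h1α₂ : (0:ℝ) < 1 - α₂ := by linarith
    set e : ℝ := min (c₂ - γ₂) (min ((c₃ - (α₁ * γ₁ + α₂ * γ₂)) / α₂)
      ((c₄ - ((1 - α₁) * γ₁ + (1 - α₂) * γ₂)) / (1 - α₂))) with he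
    have he0 : 0 < e := lt_min (by linarith)
      (lt_min (div_pos (by linarith) hα₂0) (div_pos (by linarith) h1α₂))
    have he1 : e ≤ c₂ - γ₂ := min_le_left _ _
    have he2 : α₂ * e ≤ c₃ - (α₁ * γ₁ + α₂ * γ₂) := by
      have hle : e ≤ (c₃ - (α₁ * γ₁ + α₂ * γ₂)) / α₂ :=
        min_le_of_right_le (min_le_left _ _)
      calc α₂ * e ≤ α₂ * ((c₃ - (α₁ * γ₁ + α₂ * γ₂)) / α₂) :=
            mul_le_mul_of_nonneg_left hle hα₂0.le
        _ = c₃ - (α₁ * γ₁ + α₂ * γ₂) := by field_simp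
    have he3 : (1 - α₂) * e ≤ c₄ - ((1 - α₁) * γ₁ + (1 - α₂) * γ₂) := by
      have hle : e ≤ (c₄ - ((1 - α₁) * γ₁ + (1 - α₂) * γ₂)) / (1 - α₂) :=
        min_le_of_right_le (min_le_right _ _)
      calc (1 - α₂) * e ≤ (1 - α₂) * ((c₄ - ((1 - α₁) * γ₁ + (1 - α₂) * γ₂)) / (1 - α₂)) :=
            mul_le_mul_of_nonneg_left hle h1α₂.le
        _ = c₄ - ((1 - α₁) * γ₁ + (1 - α₂) * γ₂) := by field_simp
    have := hmax γ₁ (γ₂ + e)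
      ⟨h10, h11, by linarith, by linarith, by nlinarith, by nlinarith⟩
    linarith
  have hd1 : 0 < γ₁ - r := by linarith
  -- Step 4 : the two flux inequalities
  have hI : α₂ * (γh₂ - γ₂) ≤ α₁ * (γ₁ - r) ∧
      (1 - α₂) * (γh₂ - γ₂) ≤ (1 - α₁) * (γ₁ - r) := by
    rcases hbind with hb | hb | hb
    · have heq : γh₂ = γ₂ := le_antisymm (hb ▸ g21) hD
      constructor
      · rw [heq]; nlinarith
      · rw [heq]; nlinarith
    · -- c₃ binds
      have hI3 : α₂ * (γh₂ - γ₂) ≤ α₁ * (γ₁ - r) := by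
        rw [hgh1] at g3
        nlinarith [g3, hb]
      refine ⟨hI3, ?_⟩
      by_contra hI4
      push_neg at hI4
      have hαlt : α₂ < α₁ := by
        by_contra hc
        push_neg at hc
        nlinarith [mul_nonneg (sub_nonneg.mpr hc) (sub_nonneg.mpr hD)]
      have hd2 : 0 < γh₂ - γ₂ := by nlinarith
      have hc2' : γ₂ < c₂ := by linarith [g21]
      have hc4' : (1 - α₁) * γ₁ + (1 - α₂) * γ₂ < c₄ := by
        rw [hgh1] at g4
        nlinarith
      set σ : ℝ := min (γ₁ / α₂) (min ((c₂ - γ₂) / α₁)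
        ((c₄ - ((1 - α₁) * γ₁ + (1 - α₂) * γ₂)) / (α₁ - α₂))) with hσ
      have hσ0 : 0 < σ := lt_min (div_pos (by linarith) hα₂0)
        (lt_min (div_pos (by linarith) hα₁0) (div_pos (by linarith) (by linarith)))
      have hσ1 : α₂ * σ ≤ γ₁ := by
        have hle : σ ≤ γ₁ / α₂ := min_le_left _ _
        calc α₂ * σ ≤ α₂ * (γ₁ / α₂) := mul_le_mul_of_nonneg_left hle hα₂0.le
          _ = γ₁ := by field_simp
      have hσ2 : α₁ * σ ≤ c₂ - γ₂ := by
        have hle : σ ≤ (c₂ - γ₂) / α₁ := min_le_of_right_le (min_le_left _ _)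
        calc α₁ * σ ≤ α₁ * ((c₂ - γ₂) / α₁) := mul_le_mul_of_nonneg_left hle hα₁0.le
          _ = c₂ - γ₂ := by field_simp
      have hσ3 : (α₁ - α₂) * σ ≤ c₄ - ((1 - α₁) * γ₁ + (1 - α₂) * γ₂) := by
        have hle : σ ≤ (c₄ - ((1 - α₁) * γ₁ + (1 - α₂) * γ₂)) / (α₁ - α₂) :=
          min_le_of_right_le (min_le_right _ _)
        calc (α₁ - α₂) * σ
            ≤ (α₁ - α₂) * ((c₄ - ((1 - α₁) * γ₁ + (1 - α₂) * γ₂)) / (α₁ - α₂)) :=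
              mul_le_mul_of_nonneg_left hle (by linarith)
          _ = c₄ - ((1 - α₁) * γ₁ + (1 - α₂) * γ₂) := by
              have hz : α₁ - α₂ ≠ 0 := ne_of_gt (by linarith)
              field_simp
      have hp1 : 0 < α₂ * σ := mul_pos hα₂0 hσ0
      have hp2 : 0 < α₁ * σ := mul_pos hα₁0 hσ0
      have hmem3 : memOmega α₁ α₂ c₁ c₂ c₃ c₄ (γ₁ - α₂ * σ) (γ₂ + α₁ * σ) := by
        refine ⟨by linarith, by linarith, by linarith, by linarith, ?_, ?_⟩
        · have hq : α₁ * (γ₁ - α₂ * σ) + α₂ * (γ₂ + α₁ * σ) = α₁ * γ₁ + α₂ * γ₂ := by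
            ring
          linarith [hq.le, hb.le]
        · have hq : (1 - α₁) * (γ₁ - α₂ * σ) + (1 - α₂) * (γ₂ + α₁ * σ)
              = ((1 - α₁) * γ₁ + (1 - α₂) * γ₂) + (α₁ - α₂) * σ := by ring
          linarith [hq.le, hq.ge, hσ3]
      have hms := hmax _ _ hmem3
      have hq2 : γ₁ - α₂ * σ + (γ₂ + α₁ * σ) = γ₁ + γ₂ + (α₁ - α₂) * σ := by ring
      have := mul_pos (sub_pos.mpr hαlt) hσ0
      linarith
    · -- c₄ binds
      have hI4 : (1 - α₂) * (γh₂ - γ₂) ≤ (1 - α₁) * (γ₁ - r) := by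
        rw [hgh1] at g4
        nlinarith [g4, hb]
      refine ⟨?_, hI4⟩
      by_contra hI3
      push_neg at hI3
      have hαlt : α₁ < α₂ := by
        by_contra hc
        push_neg at hc
        nlinarith [mul_nonneg (sub_nonneg.mpr hc) (sub_nonneg.mpr hD)]
      have hd2 : 0 < γh₂ - γ₂ := by nlinarith
      have hc2' : γ₂ < c₂ := by linarith [g21]
      have hc3' : α₁ * γ₁ + α₂ * γ₂ < c₃ := by
        rw [hgh1] at g3
        nlinarith
      have h1α₁ : (0:ℝ) < 1 - α₁ := by linarith
      have h1α₂ : (0:ℝ) < 1 - α₂ := by linarith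
      set σ : ℝ := min (γ₁ / (1 - α₂)) (min ((c₂ - γ₂) / (1 - α₁))
        ((c₃ - (α₁ * γ₁ + α₂ * γ₂)) / (α₂ - α₁))) with hσ
      have hσ0 : 0 < σ := lt_min (div_pos (by linarith) h1α₂)
        (lt_min (div_pos (by linarith) h1α₁) (div_pos (by linarith) (by linarith)))
      have hσ1 : (1 - α₂) * σ ≤ γ₁ := by
        have hle : σ ≤ γ₁ / (1 - α₂) := min_le_left _ _
        calc (1 - α₂) * σ ≤ (1 - α₂) * (γ₁ / (1 - α₂)) :=
              mul_le_mul_of_nonneg_left hle h1α₂.le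
          _ = γ₁ := by field_simp
      have hσ2 : (1 - α₁) * σ ≤ c₂ - γ₂ := by
        have hle : σ ≤ (c₂ - γ₂) / (1 - α₁) := min_le_of_right_le (min_le_left _ _)
        calc (1 - α₁) * σ ≤ (1 - α₁) * ((c₂ - γ₂) / (1 - α₁)) :=
              mul_le_mul_of_nonneg_left hle h1α₁.le
          _ = c₂ - γ₂ := by field_simp
      have hσ3 : (α₂ - α₁) * σ ≤ c₃ - (α₁ * γ₁ + α₂ * γ₂) := by
        have hle : σ ≤ (c₃ - (α₁ * γ₁ + α₂ * γ₂)) / (α₂ - α₁) :=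
          min_le_of_right_le (min_le_right _ _)
        calc (α₂ - α₁) * σ
            ≤ (α₂ - α₁) * ((c₃ - (α₁ * γ₁ + α₂ * γ₂)) / (α₂ - α₁)) :=
              mul_le_mul_of_nonneg_left hle (by linarith)
          _ = c₃ - (α₁ * γ₁ + α₂ * γ₂) := by
              have hz : α₂ - α₁ ≠ 0 := ne_of_gt (by linarith)
              field_simp
      have hp1 : 0 < (1 - α₂) * σ := mul_pos h1α₂ hσ0
      have hp2 : 0 < (1 - α₁) * σ := mul_pos h1α₁ hσ0
      have hmem3 : memOmega α₁ α₂ c₁ c₂ c₃ c₄ (γ₁ - (1 - α₂) * σ) (γ₂ + (1 - α₁) * σ) := by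
        refine ⟨by linarith, by linarith, by linarith, by linarith, ?_, ?_⟩
        · have hq : α₁ * (γ₁ - (1 - α₂) * σ) + α₂ * (γ₂ + (1 - α₁) * σ)
              = (α₁ * γ₁ + α₂ * γ₂) + (α₂ - α₁) * σ := by ring
          linarith [hq.le, hq.ge, hσ3]
        · have hq : (1 - α₁) * (γ₁ - (1 - α₂) * σ) + (1 - α₂) * (γ₂ + (1 - α₁) * σ)
              = (1 - α₁) * γ₁ + (1 - α₂) * γ₂ := by ring
          linarith [hq.le, hb.le]
      have hms := hmax _ _ hmem3
      have hq2 : γ₁ - (1 - α₂) * σ + (γ₂ + (1 - α₁) * σ) = γ₁ + γ₂ + (α₂ - α₁) * σ := by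
        ring
      have := mul_pos (sub_pos.mpr hαlt) hσ0
      linarith
  obtain ⟨hI3, hI4⟩ := hI
  subst hgh1
  refine ⟨rfl, hD, by nlinarith, by nlinarith, ?_⟩
  rw [sub_self, abs_zero, abs_of_nonneg (by linarith : (0:ℝ) ≤ γh₂ - γ₂),
    abs_of_nonpos (by nlinarith : (α₁ * γh₁ + α₂ * γh₂) - (α₁ * γ₁ + α₂ * γ₂) ≤ 0),
    abs_of_nonpos (by nlinarith :
      ((1 - α₁) * γh₁ + (1 - α₂) * γh₂) - ((1 - α₁) * γ₁ + (1 - α₂) * γ₂) ≤ 0)]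
  ring
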